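/- Let p > 1 and let ρ(ζ) = exp(e^{2ζ}/4 − ((p+3)/(p−1))ζ), with weighted measure dμ = ρ(ζ)dζ on ℝ. If w : ℝ → ℝ is continuously differentiable with ∫_ℝ w(ζ)² dμ(ζ) < ∞ and ∫_ℝ w'(ζ)² dμ(ζ) < ∞, then ρ(ζ) · w(ζ)² → 0 as ζ → +∞; in particular, w has super-exponential decay at +∞. -/

import Mathlib

open Real Set Filter MeasureTheory

/-- if `w ∈ H¹(ℝ, dμ)` with `ρ(ζ) = exp(e^{2ζ}/4 − ((p+3)/(p−1))ζ)`, then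
`ρ(ζ) w(ζ)² → 0` as `ζ → +∞` (super-exponential decay of `w` at `+∞`). -/
theorem stmt_11 (p : ℝ) (hp : 1 < p)
    (ρ : ℝ → ℝ)
    (hρ : ∀ ζ, ρ ζ = Real.exp (Real.exp (2 * ζ) / 4 - ((p + 3) / (p - 1)) * ζ))
    (w : ℝ → ℝ) (hw : ContDiff ℝ 1 w)
    (hw2 : Integrable (fun ζ => (w ζ) ^ 2 * ρ ζ))
    (hw2' : Integrable (fun ζ => (deriv w ζ) ^ 2 * ρ ζ)) :
    Tendsto (fun ζ => ρ ζ * (w ζ) ^ 2) atTop (nhds 0) := by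
  have hρ_eq : ρ = fun ζ => Real.exp (Real.exp (2 * ζ) / 4 - ((p + 3) / (p - 1)) * ζ) :=
    funext hρ
  subst hρ_eq
  set c : ℝ := (p + 3) / (p - 1) with hc_def
  have hc : 0 < c := div_pos (by linarith) (by linarith)
  set ρ : ℝ → ℝ := fun ζ => Real.exp (Real.exp (2 * ζ) / 4 - c * ζ) with hρ_def
  have hρpos : ∀ ζ, 0 < ρ ζ := fun ζ => Real.exp_pos _
  have hw_diff : Differentiable ℝ w := hw.differentiable one_ne_zero
  have hw'_cont : Continuous (deriv w) := hw.continuous_deriv le_rfl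
  have hw_cont : Continuous w := hw.continuous
  have hρ_cont : Continuous ρ := by
    apply Real.continuous_exp.comp
    exact ((Real.continuous_exp.comp (continuous_const.mul continuous_id)).div_const 4).sub
      (continuous_const.mul continuous_id)
  set g : ℝ → ℝ := fun ζ => ρ ζ * w ζ ^ 2 with hg_def
  set h2 : ℝ → ℝ := fun ζ => ρ ζ * (2 * w ζ * deriv w ζ) with hh2_def
  set gd : ℝ → ℝ := fun ζ => (Real.exp (2 * ζ) / 2 - c) * (ρ ζ * w ζ ^ 2) + h2 ζ with hgd_def
  have hg_cont : Continuous g := hρ_cont.mul (hw_cont.pow 2)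
  have hh2_cont : Continuous h2 :=
    hρ_cont.mul ((continuous_const.mul hw_cont).mul hw'_cont)
  have hgd_cont : Continuous gd := by
    apply Continuous.add _ hh2_cont
    exact (((Real.continuous_exp.comp (continuous_const.mul continuous_id)).div_const 2).sub
      continuous_const).mul (hρ_cont.mul (hw_cont.pow 2))
  -- derivative of ρ
  have hρd : ∀ ζ, HasDerivAt ρ ((Real.exp (2 * ζ) / 2 - c) * ρ ζ) ζ := by
    intro ζ
    have h1 : HasDerivAt (fun t : ℝ => 2 * t) 2 ζ := by
      simpa using (hasDerivAt_id ζ).const_mul (2 : ℝ)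
    have h2' : HasDerivAt (fun t : ℝ => Real.exp (2 * t)) (Real.exp (2 * ζ) * 2) ζ := h1.exp
    have h3 : HasDerivAt (fun t : ℝ => Real.exp (2 * t) / 4 - c * t)
        (Real.exp (2 * ζ) * 2 / 4 - c) ζ := by
      have h4 : HasDerivAt (fun t : ℝ => c * t) c ζ := by
        simpa using (hasDerivAt_id ζ).const_mul c
      exact (h2'.div_const 4).sub h4
    have h5 := h3.exp
    convert h5 using 1
    simp only [hρ_def]
    ring
  have hw2d : ∀ ζ, HasDerivAt (fun t => w t ^ 2) (2 * w ζ * deriv w ζ) ζ := by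
    intro ζ
    have := ((hw_diff ζ).hasDerivAt).pow 2
    refine this.congr_deriv ?_
    norm_num
  have hgd : ∀ ζ, HasDerivAt g (gd ζ) ζ := by
    intro ζ
    have := (hρd ζ).mul (hw2d ζ)
    refine this.congr_deriv ?_
    simp only [hgd_def, hh2_def]
    ring
  -- integrability
  have hg_int : Integrable g := by
    simpa [hg_def, mul_comm] using hw2
  have hh2_int : Integrable h2 := by
    have hbd : ∀ ζ, |h2 ζ| ≤ w ζ ^ 2 * ρ ζ + (deriv w ζ) ^ 2 * ρ ζ := by
      intro ζ
      have hρ0 : 0 ≤ ρ ζ := (hρpos ζ).le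
      rw [abs_le]
      constructor
      · simp only [hh2_def]
        nlinarith [mul_nonneg hρ0 (sq_nonneg (w ζ + deriv w ζ))]
      · simp only [hh2_def]
        nlinarith [mul_nonneg hρ0 (sq_nonneg (w ζ - deriv w ζ))]
    refine (hw2.add hw2').mono hh2_cont.aestronglyMeasurable (ae_of_all _ fun ζ => ?_)
    rw [Real.norm_eq_abs, Real.norm_eq_abs]
    exact (hbd ζ).trans (le_abs_self _)
  have hh2abs_int : Integrable (fun ζ => |h2 ζ|) := hh2_int.abs
  have hg_nonneg : ∀ ζ, 0 ≤ g ζ := fun ζ => mul_nonneg (hρpos ζ).le (sq_nonneg _)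
  -- key inequality
  have key : ∀ T a b : ℝ, c ≤ a → T ≤ a → a ≤ b →
      g a - (∫ x in Ici T, |h2 x|) ≤ g b := by
    intro T a b hca hTa hab
    have ftc : ∫ t in a..b, gd t = g b - g a :=
      intervalIntegral.integral_eq_sub_of_hasDerivAt (fun t _ => hgd t)
        (hgd_cont.intervalIntegrable a b)
    have step1 : ∫ t in a..b, h2 t ≤ ∫ t in a..b, gd t := by
      apply intervalIntegral.integral_mono_on hab (hh2_cont.intervalIntegrable _ _)
        (hgd_cont.intervalIntegrable _ _)
      intro t ht
      have htc : c ≤ t := le_trans hca ht.1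
      have hexp : 0 ≤ Real.exp (2 * t) / 2 - c := by
        have := Real.add_one_le_exp (2 * t)
        nlinarith
      have h0 : 0 ≤ (Real.exp (2 * t) / 2 - c) * (ρ t * w t ^ 2) :=
        mul_nonneg hexp (mul_nonneg (hρpos t).le (sq_nonneg _))
      simp only [hgd_def]
      linarith
    have habs : |∫ t in a..b, h2 t| ≤ ∫ t in a..b, |h2 t| :=
      intervalIntegral.abs_integral_le_integral_abs hab
    have hsub : ∫ t in a..b, |h2 t| ≤ ∫ x in Ici T, |h2 x| := by
      rw [intervalIntegral.integral_of_le hab]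
      apply setIntegral_mono_set hh2abs_int.integrableOn
        (ae_of_all _ fun x => abs_nonneg _)
      exact HasSubset.Subset.eventuallyLE fun x hx => le_trans hTa hx.1.le
    have := neg_abs_le (∫ t in a..b, h2 t)
    linarith
  -- tail of |h2| tends to 0
  have tail : Tendsto (fun T => ∫ x in Ici T, |h2 x|) atTop (nhds 0) := by
    have hiInter : (⋂ T : ℝ, Ici T) = (∅ : Set ℝ) := by
      rw [Set.eq_empty_iff_forall_notMem]
      intro x hx
      have := (Set.mem_iInter.1 hx) (x + 1)
      simp only [Set.mem_Ici] at this
      linarith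
    have := tendsto_setIntegral_of_antitone (μ := volume) (f := fun x => |h2 x|)
      (s := fun T : ℝ => Ici T) (fun T => measurableSet_Ici)
      (fun i j hij => Ici_subset_Ici.2 hij) ⟨0, hh2abs_int.integrableOn⟩
    simpa [hiInter] using this
  -- conclude
  rw [tendsto_order]
  constructor
  · intro a ha
    exact Eventually.of_forall fun b => lt_of_lt_of_le ha (hg_nonneg b)
  · intro ε hε
    by_contra hcon
    rw [Filter.not_eventually] at hcon
    have hcon' : ∃ᶠ b in atTop, ε ≤ g b := hcon.mono fun b hb => not_lt.1 hb
    obtain ⟨T, hT1, hT2⟩ :=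
      ((tail.eventually (gt_mem_nhds (half_pos hε))).and (eventually_ge_atTop c)).exists
    obtain ⟨a, haT, haε⟩ := (hcon'.and_eventually (eventually_ge_atTop T)).exists
    have hIci : Ici a ⊆ {x | ε / 2 ≤ g x} := by
      intro b hb
      have := key T a b (le_trans hT2 haε) haε hb
      simp only [Set.mem_setOf_eq]
      linarith
    have hfin : volume {x | ε / 2 ≤ g x} < ⊤ := hg_int.measure_ge_lt_top (half_pos hε)
    have : volume (Ici a) ≤ volume {x | ε / 2 ≤ g x} := measure_mono hIci
    rw [Real.volume_Ici] at this
    exact absurd (lt_of_le_of_lt this hfin) (by simp)
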